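/- Let (Ω, F, P) be a probability space and T : Ω → Ω an invertible transformation such that both T and T^{-1} are measurable and measure-preserving, and T is ergodic. Let Q : Ω → ℝ be integrable with E[Q] < 0, and let b : Ω → [0,∞) be measurable and tempered, i.e. for almost every ω, log⁺ b(T^n ω)/|n| → 0 as n → ±∞. Let y_k : Ω → [0,∞) (k ∈ ℕ) and η_j : Ω → [0,∞) (j ∈ ℕ) be measurable and suppose: (i) η_j(ω) ≤ b(T^j ω) for all j and ω; (ii) η_j → 0 in probability as j → ∞; (iii) for every k ≥ 1 and almost every ω, y_k(ω) ≤ y_0(ω) · exp(Σ_{j=0}^{k−1} Q(T^j ω)) + Σ_{j=0}^{k−1} exp(Σ_{j'=j}^{k−1} Q(T^{j'} ω)) · η_j(ω). Then y_k → 0 in probability as k → ∞. -/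

import Mathlib

set_option linter.unusedSectionVars false
set_option linter.unnecessarySimpa false
set_option linter.unusedVariables false

open MeasureTheory Filter Function

section Aux
variable {Ω : Type*} [MeasurableSpace Ω]

/-- Running maximum of Birkhoff sums. -/
noncomputable def maxB (T : Ω → Ω) (g : Ω → ℝ) : ℕ → Ω → ℝ
  | 0 => fun _ => 0
  | n+1 => fun ω => max (maxB T g n ω) (birkhoffSum T g (n+1) ω)

theorem maxB_nonneg (T : Ω → Ω) (g : Ω → ℝ) (n : ℕ) (ω : Ω) : 0 ≤ maxB T g n ω := by
  induction n with
  | zero => simp [maxB]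
  | succ n ih => exact le_max_of_le_left ih

theorem maxB_le_succ (T : Ω → Ω) (g : Ω → ℝ) (n : ℕ) (ω : Ω) :
    maxB T g n ω ≤ maxB T g (n+1) ω := le_max_left _ _

theorem maxB_mono (T : Ω → Ω) (g : Ω → ℝ) {n n' : ℕ} (h : n ≤ n') (ω : Ω) :
    maxB T g n ω ≤ maxB T g n' ω := by
  induction n', h using Nat.le_induction with
  | base => exact le_refl _
  | succ n' h ih => exact le_trans ih (maxB_le_succ T g n' ω)

theorem birkhoffSum_le_maxB (T : Ω → Ω) (g : Ω → ℝ) (n : ℕ) (ω : Ω) :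
    birkhoffSum T g n ω ≤ maxB T g n ω := by
  cases n with
  | zero => simp [maxB, birkhoffSum]
  | succ n => exact le_max_right _ _

theorem maxB_succ_le (T : Ω → Ω) (g : Ω → ℝ) (n : ℕ) (ω : Ω) :
    maxB T g (n+1) ω ≤ max 0 (g ω + maxB T g n (T ω)) := by
  induction n generalizing ω with
  | zero =>
      have h1 : birkhoffSum T g 1 ω = g ω := birkhoffSum_one T g ω
      simp only [maxB]
      refine max_le (by simp) ?_
      rw [h1]
      exact le_max_of_le_right (by simp)
  | succ n ih =>
      show max (maxB T g (n+1) ω) (birkhoffSum T g (n+2) ω) ≤ _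
      refine max_le ?_ ?_
      · exact le_trans (ih ω) (max_le_max le_rfl
          (add_le_add le_rfl (maxB_le_succ T g n (T ω))))
      · have h2 : birkhoffSum T g (n+2) ω = g ω + birkhoffSum T g (n+1) (T ω) :=
          birkhoffSum_succ' T g (n+1) ω
        rw [h2]
        exact le_max_of_le_right (add_le_add le_rfl (le_max_right _ _))

theorem birkhoffSum_measurable {T : Ω → Ω} {g : Ω → ℝ} (hT : Measurable T) (hg : Measurable g)
    (n : ℕ) : Measurable (fun ω => birkhoffSum T g n ω) := by
  unfold birkhoffSum
  exact Finset.measurable_sum _ fun k _ => hg.comp (hT.iterate k)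

theorem maxB_measurable {T : Ω → Ω} {g : Ω → ℝ} (hT : Measurable T) (hg : Measurable g)
    (n : ℕ) : Measurable (maxB T g n) := by
  induction n with
  | zero => simpa [maxB] using measurable_const
  | succ n ih => exact Measurable.max ih (birkhoffSum_measurable hT hg (n+1))

theorem maxB_integrable {P : Measure Ω} {T : Ω → Ω} (hT : MeasurePreserving T P P)
    {g : Ω → ℝ} (hg : Measurable g) (hgi : Integrable g P) (n : ℕ) :
    Integrable (maxB T g n) P := by
  induction n with
  | zero => simpa [maxB] using integrable_const (0:ℝ)
  | succ n ih =>
      have hbs : Integrable (fun ω => birkhoffSum T g (n+1) ω) P := by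
        unfold birkhoffSum
        refine integrable_finset_sum _ fun k _ => ?_
        exact ((hT.iterate k).integrable_comp hgi.1).mpr hgi
      have := ih.sup hbs
      exact this

/-- Easy half of the Birkhoff ergodic theorem, via the maximal ergodic theorem:
for ergodic `T` and integrable `Q`, for any `c0 > ∫ Q` the Birkhoff sums satisfy
an a.s. linear upper bound `m * c0 + c`. -/
theorem birkhoff_upper (P : Measure Ω) [IsProbabilityMeasure P]
    {T : Ω → Ω} (hT : Ergodic T P) {Q : Ω → ℝ} (hQm : Measurable Q) (hQ : Integrable Q P)
    {c0 : ℝ} (hc0 : ∫ ω, Q ω ∂P < c0) :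
    ∀ᵐ ω ∂P, ∃ c : ℝ, ∀ m : ℕ, ∑ j ∈ Finset.range m, Q (T^[j] ω) ≤ m * c0 + c := by
  have hTm : Measurable T := hT.toMeasurePreserving.measurable
  set g : Ω → ℝ := fun ω => Q ω - c0 with hgdef
  have hgm : Measurable g := hQm.sub measurable_const
  have hgi : Integrable g P := hQ.sub (integrable_const c0)
  have hgint : ∫ ω, g ω ∂P < 0 := by
    have : ∫ ω, g ω ∂P = (∫ ω, Q ω ∂P) - c0 := by
      rw [hgdef]
      rw [integral_sub hQ (integrable_const c0), integral_const]
      simp [measure_univ]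
    rw [this]; linarith
  set A : ℕ → Set Ω := fun n => {ω | 0 < maxB T g n ω} with hAdef
  have hAmeas : ∀ n, MeasurableSet (A n) :=
    fun n => measurableSet_lt measurable_const (maxB_measurable hTm hgm n)
  have hAmono : Monotone A := fun n n' h ω hω =>
    lt_of_lt_of_le hω (maxB_mono T g h ω)
  -- maximal ergodic theorem
  have hint : ∀ n, 0 ≤ ∫ ω in A n, g ω ∂P := by
    intro n
    cases n with
    | zero =>
        have : A 0 = ∅ := by
          ext ω; simp [hAdef, maxB]
        simp [this]
    | succ n =>
        have hMi : Integrable (maxB T g (n+1)) P := maxB_integrable hT.toMeasurePreserving hgm hgi (n+1)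
        have hMTi : Integrable (fun ω => maxB T g (n+1) (T ω)) P :=
          (hT.toMeasurePreserving.integrable_comp hMi.1).mpr hMi
        have hpt : ∀ ω ∈ A (n+1), maxB T g (n+1) ω - maxB T g (n+1) (T ω) ≤ g ω := by
          intro ω hω
          have h1 := maxB_succ_le T g n ω
          have hω' : 0 < maxB T g (n+1) ω := hω
          rcases le_total (g ω + maxB T g n (T ω)) 0 with h | h
          · rw [max_eq_left h] at h1; linarith
          · rw [max_eq_right h] at h1
            have := maxB_le_succ T g n (T ω)
            linarith
        have h2 : ∫ ω in A (n+1), (maxB T g (n+1) ω - maxB T g (n+1) (T ω)) ∂P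
            ≤ ∫ ω in A (n+1), g ω ∂P := by
          refine setIntegral_mono_on ((hMi.sub hMTi).integrableOn) (hgi.integrableOn)
            (hAmeas (n+1)) hpt
        have h3 : ∫ ω in A (n+1), (maxB T g (n+1) ω - maxB T g (n+1) (T ω)) ∂P
            = (∫ ω in A (n+1), maxB T g (n+1) ω ∂P) - ∫ ω in A (n+1), maxB T g (n+1) (T ω) ∂P :=
          integral_sub hMi.integrableOn hMTi.integrableOn
        have h4 : ∫ ω in A (n+1), maxB T g (n+1) ω ∂P = ∫ ω, maxB T g (n+1) ω ∂P := by
          refine setIntegral_eq_integral_of_forall_compl_eq_zero fun ω hω => ?_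
          have h5 : ¬ (0 < maxB T g (n+1) ω) := hω
          exact le_antisymm (not_lt.mp h5) (maxB_nonneg T g (n+1) ω)
        have h6 : ∫ ω in A (n+1), maxB T g (n+1) (T ω) ∂P ≤ ∫ ω, maxB T g (n+1) (T ω) ∂P :=
          setIntegral_le_integral hMTi (ae_of_all _ fun ω => maxB_nonneg T g (n+1) (T ω))
        have h7 : ∫ ω, maxB T g (n+1) (T ω) ∂P = ∫ ω, maxB T g (n+1) ω ∂P := by
          rw [← integral_map hTm.aemeasurable
            (by rw [hT.toMeasurePreserving.map_eq]; exact hMi.1),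
            hT.toMeasurePreserving.map_eq]
        linarith
  set Aall : Set Ω := ⋃ n, A n with hAalldef
  have hAallmeas : MeasurableSet Aall := MeasurableSet.iUnion hAmeas
  have htend := tendsto_setIntegral_of_monotone hAmeas hAmono (hgi.integrableOn (s := Aall))
  have hAint : 0 ≤ ∫ ω in Aall, g ω ∂P := ge_of_tendsto' htend hint
  -- the invariant set of unbounded Birkhoff sums
  set C : Set Ω := ⋂ c : ℕ, ⋃ m : ℕ, {ω | (c:ℝ) < birkhoffSum T g m ω} with hCdef
  have hCmeas : MeasurableSet C := by
    refine MeasurableSet.iInter fun c => MeasurableSet.iUnion fun m => ?_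
    exact measurableSet_lt measurable_const (birkhoffSum_measurable hTm hgm m)
  have hCinv : T ⁻¹' C = C := by
    ext ω
    simp only [hCdef, Set.mem_preimage, Set.mem_iInter, Set.mem_iUnion, Set.mem_setOf_eq]
    constructor
    · intro h c
      obtain ⟨m, hm⟩ := h (Nat.ceil ((c:ℝ) - g ω))
      refine ⟨m+1, ?_⟩
      rw [birkhoffSum_succ']
      have := Nat.le_ceil ((c:ℝ) - g ω)
      linarith
    · intro h c
      obtain ⟨m, hm⟩ := h (Nat.ceil ((c:ℝ) + g ω))
      have hce := Nat.le_ceil ((c:ℝ) + g ω)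
      match m with
      | 0 =>
          exfalso
          rw [birkhoffSum_zero] at hm
          have : (0:ℝ) ≤ (Nat.ceil ((c:ℝ) + g ω) : ℝ) := Nat.cast_nonneg _
          linarith
      | m+1 =>
          refine ⟨m, ?_⟩
          rw [birkhoffSum_succ'] at hm
          linarith
  have hCsub : C ⊆ Aall := by
    intro ω hω
    simp only [hCdef, Set.mem_iInter, Set.mem_iUnion, Set.mem_setOf_eq] at hω
    obtain ⟨m, hm⟩ := hω 0
    have : 0 < maxB T g m ω := lt_of_lt_of_le (by exact_mod_cast hm) (birkhoffSum_le_maxB T g m ω)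
    exact Set.mem_iUnion.2 ⟨m, this⟩
  rcases hT.toPreErgodic.measure_self_or_compl_eq_zero hCmeas hCinv with h0 | h1
  · -- P C = 0 : almost every ω has bounded Birkhoff sums
    have hae : ∀ᵐ ω ∂P, ω ∉ C := by
      rw [ae_iff]
      simpa [not_not, Set.setOf_mem_eq] using h0
    filter_upwards [hae] with ω hω
    simp only [hCdef, Set.mem_iInter, Set.mem_iUnion, Set.mem_setOf_eq, not_forall, not_exists,
      not_lt] at hω
    obtain ⟨c, hc⟩ := hω
    refine ⟨c, fun m => ?_⟩
    have h8 : birkhoffSum T g m ω = (∑ j ∈ Finset.range m, Q (T^[j] ω)) - m * c0 := by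
      unfold birkhoffSum
      rw [hgdef]
      simp [Finset.sum_sub_distrib]
    have := hc m
    rw [h8] at this
    linarith
  · -- P Cᶜ = 0 : contradiction with ∫ g < 0
    exfalso
    have hAc : P Aallᶜ = 0 := measure_mono_null (Set.compl_subset_compl.mpr hCsub) h1
    have h9 : (∫ ω in Aall, g ω ∂P) + ∫ ω in Aallᶜ, g ω ∂P = ∫ ω, g ω ∂P :=
      integral_add_compl hAallmeas hgi
    have h10 : ∫ ω in Aallᶜ, g ω ∂P = 0 := by
      rw [Measure.restrict_eq_zero.mpr hAc]
      simp
    linarith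
end Aux
section Main
variable {Ω : Type*} [MeasurableSpace Ω]

theorem stmt_4_meas (P : Measure Ω) [IsProbabilityMeasure P]
    (T S : Ω → Ω) (hST : ∀ ω, S (T ω) = ω) (hTS : ∀ ω, T (S ω) = ω)
    (hT : Ergodic T P) (hS : MeasurePreserving S P P)
    (Q : Ω → ℝ) (hQm : Measurable Q) (hQ : Integrable Q P) (hEQ : ∫ ω, Q ω ∂P < 0)
    (b : Ω → ℝ) (hb_meas : Measurable b) (hb_nonneg : ∀ ω, 0 ≤ b ω)
    (hb_temp : ∀ᵐ ω ∂P,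
      Tendsto (fun n : ℕ => max (Real.log (b (T^[n] ω))) 0 / (n : ℝ)) atTop (nhds 0) ∧
      Tendsto (fun n : ℕ => max (Real.log (b (S^[n] ω))) 0 / (n : ℝ)) atTop (nhds 0))
    (y η : ℕ → Ω → ℝ)
    (hy_meas : ∀ k, Measurable (y k)) (hη_meas : ∀ j, Measurable (η j))
    (hy_nonneg : ∀ k ω, 0 ≤ y k ω) (hη_nonneg : ∀ j ω, 0 ≤ η j ω)
    (hi : ∀ j ω, η j ω ≤ b (T^[j] ω))
    (hii : ∀ δ : ℝ, 0 < δ →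
      Tendsto (fun j : ℕ => P {ω | δ ≤ η j ω}) atTop (nhds 0))
    (hiii : ∀ k : ℕ, 1 ≤ k → ∀ᵐ ω ∂P,
      y k ω ≤ y 0 ω * Real.exp (∑ j ∈ Finset.range k, Q (T^[j] ω)) +
        ∑ j ∈ Finset.range k,
          Real.exp (∑ j' ∈ Finset.Ico j k, Q (T^[j'] ω)) * η j ω) :
    ∀ δ : ℝ, 0 < δ →
      Tendsto (fun k : ℕ => P {ω | δ ≤ y k ω}) atTop (nhds 0) := by
  intro δ hδ
  have hTm : Measurable T := hT.toMeasurePreserving.measurable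
  have hSm : Measurable S := hS.measurable
  -- basic iterate identities
  have hSTn : ∀ (n : ℕ) (ω : Ω), S^[n] (T^[n] ω) = ω := by
    intro n
    induction n with
    | zero => intro ω; simp
    | succ n ih =>
        intro ω
        calc S^[n+1] (T^[n+1] ω) = S^[n] (S (T (T^[n] ω))) := by
              rw [Function.iterate_succ_apply, Function.iterate_succ_apply']
          _ = ω := by rw [hST, ih]
  have hback : ∀ (m k : ℕ) (ω : Ω), m ≤ k → S^[m] (T^[k] ω) = T^[k-m] ω := by
    intro m k ω h
    conv_lhs => rw [show k = m + (k-m) by omega, Function.iterate_add_apply]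
    rw [hSTn]
  -- S is ergodic
  have ergS : Ergodic S P := by
    refine ⟨hS, ⟨fun s hs hinv => hT.toPreErgodic.aeconst_set hs ?_⟩⟩
    ext ω
    rw [Set.mem_preimage]
    constructor
    · intro h
      have : S (T ω) ∈ s := by rw [← hinv] at h; exact h
      rwa [hST] at this
    · intro h
      have : S (T ω) ∈ s := by rw [hST]; exact h
      rw [← hinv]; exact this
  set c0 : ℝ := (∫ ω, Q ω ∂P) / 2 with hc0def
  have hc00 : c0 < 0 := by rw [hc0def]; linarith
  have hc0 : ∫ ω, Q ω ∂P < c0 := by rw [hc0def]; linarith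
  set θ : ℝ := Real.exp (c0/2) with hθdef
  have hθ0 : 0 < θ := Real.exp_pos _
  have hθ1 : θ < 1 := Real.exp_lt_one_iff.mpr (by linarith)
  set R : ℕ → Ω → ℝ := fun m ω => ∑ i ∈ Finset.range m, Q (S^[i+1] ω) with hRdef
  have hRmeas : ∀ m, Measurable (R m) :=
    fun m => Finset.measurable_sum _ fun i _ => hQm.comp (hSm.iterate (i+1))
  -- Birkhoff upper bound, forward
  have hUP_T := birkhoff_upper P hT hQm hQ hc0
  -- Birkhoff upper bound, backward
  have hUP_S : ∀ᵐ ω ∂P, ∃ c : ℝ, ∀ m : ℕ, R m ω ≤ m * c0 + c := by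
    have h1 := birkhoff_upper P ergS hQm hQ hc0
    have h2 := hS.quasiMeasurePreserving.ae h1
    filter_upwards [h2] with ω hω
    obtain ⟨c, hc⟩ := hω
    refine ⟨c, fun m => ?_⟩
    have := hc m
    simpa [hRdef, Function.iterate_succ_apply] using this
  -- temperedness along the backward orbit
  have htemp : ∀ᵐ ω ∂P, ∃ c2 : ℝ, ∀ m : ℕ,
      b (S^[m] ω) ≤ Real.exp (c2 + m * (-(c0/2))) := by
    filter_upwards [hb_temp] with ω hω
    have hev : ∀ᶠ n in atTop,
        max (Real.log (b (S^[n] ω))) 0 / (n:ℝ) < -(c0/2) :=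
      hω.2.eventually_lt_const (by linarith)
    obtain ⟨N, hN⟩ := eventually_atTop.mp hev
    refine ⟨∑ n ∈ Finset.range (N+1), max (Real.log (b (S^[n] ω))) 0, fun m => ?_⟩
    have hble : ∀ ω' : Ω, b ω' ≤ Real.exp (max (Real.log (b ω')) 0) := by
      intro ω'
      rcases eq_or_lt_of_le (hb_nonneg ω') with h | h
      · rw [← h]; positivity
      · calc b ω' = Real.exp (Real.log (b ω')) := (Real.exp_log h).symm
          _ ≤ _ := Real.exp_le_exp.mpr (le_max_left _ _)
    have hc2nonneg : (0:ℝ) ≤ ∑ n ∈ Finset.range (N+1), max (Real.log (b (S^[n] ω))) 0 :=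
      Finset.sum_nonneg fun n _ => le_max_right _ _
    by_cases hm : m ≤ N
    · have h1 : max (Real.log (b (S^[m] ω))) 0
          ≤ ∑ n ∈ Finset.range (N+1), max (Real.log (b (S^[n] ω))) 0 :=
        Finset.single_le_sum (f := fun n => max (Real.log (b (S^[n] ω))) 0)
          (fun n _ => le_max_right _ _) (Finset.mem_range.mpr (Nat.lt_succ_of_le hm))
      refine (hble _).trans (Real.exp_le_exp.mpr ?_)
      have : (0:ℝ) ≤ m * (-(c0/2)) := by
        have : (0:ℝ) ≤ -(c0/2) := by linarith
        positivity
      linarith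
    · push_neg at hm
      have hmpos0 : 0 < m := by omega
      have hmpos : (0:ℝ) < m := by exact_mod_cast hmpos0
      have h1 := hN m (by omega)
      rw [div_lt_iff₀ hmpos] at h1
      refine (hble _).trans (Real.exp_le_exp.mpr ?_)
      have : max (Real.log (b (S^[m] ω))) 0 < -(c0/2) * m := h1
      nlinarith
  -- combined geometric bound along the backward orbit
  have hgood : ∀ᵐ ω ∂P, ∃ c : ℝ, ∀ m : ℕ,
      Real.exp (R m ω) * b (S^[m] ω) ≤ Real.exp c * θ^m := by
    filter_upwards [hUP_S, htemp] with ω h1 h2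
    obtain ⟨c1, hc1⟩ := h1
    obtain ⟨c2, hc2⟩ := h2
    refine ⟨c1 + c2, fun m => ?_⟩
    have key : (m:ℝ) * c0 + c1 + (c2 + m * (-(c0/2))) = c1 + c2 + m * (c0/2) := by ring
    calc Real.exp (R m ω) * b (S^[m] ω)
        ≤ Real.exp ((m:ℝ) * c0 + c1) * Real.exp (c2 + m * (-(c0/2))) :=
          mul_le_mul (Real.exp_le_exp.mpr (hc1 m)) (hc2 m) (hb_nonneg _) (Real.exp_nonneg _)
      _ = Real.exp (c1 + c2 + m * (c0/2)) := by rw [← Real.exp_add, key]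
      _ = Real.exp (c1 + c2) * θ^m := by
          rw [Real.exp_add, hθdef, ← Real.exp_nat_mul]
  -- the tail sums and tail events
  set V : ℕ → ℕ → Ω → ℝ :=
    fun L k ω => ∑ m ∈ Finset.Icc (L+1) k, Real.exp (R m ω) * b (S^[m] ω) with hVdef
  have hVmeas : ∀ L k, Measurable (V L k) := fun L k =>
    Finset.measurable_sum _ fun m _ =>
      ((Real.measurable_exp.comp (hRmeas m)).mul (hb_meas.comp (hSm.iterate m)))
  set E : ℕ → Set Ω := fun L => ⋃ k, {ω | δ/4 ≤ V L k ω} with hEdef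
  have hEmeas : ∀ L, MeasurableSet (E L) := fun L =>
    MeasurableSet.iUnion fun k => measurableSet_le measurable_const (hVmeas L k)
  have hEanti : Antitone E := by
    intro L L' hLL' ω hω
    obtain ⟨k, hk⟩ := Set.mem_iUnion.mp hω
    refine Set.mem_iUnion.2 ⟨k, ?_⟩
    show δ/4 ≤ V L k ω
    refine le_trans hk ?_
    refine Finset.sum_le_sum_of_subset_of_nonneg
      (Finset.Icc_subset_Icc (by omega) le_rfl) fun m _ _ => ?_
    exact mul_nonneg (Real.exp_nonneg _) (hb_nonneg _)
  have hgeom : ∀ (L k : ℕ), ∑ m ∈ Finset.Icc (L+1) k, θ^m ≤ θ^(L+1) * (1-θ)⁻¹ := by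
    intro L k
    rw [← Finset.Ico_add_one_right_eq_Icc, Finset.sum_Ico_eq_sum_range]
    have h1 : ∀ i, θ^(L+1+i) = θ^(L+1) * θ^i := fun i => pow_add θ (L+1) i
    calc ∑ i ∈ Finset.range (k+1-(L+1)), θ^(L+1+i)
        = θ^(L+1) * ∑ i ∈ Finset.range (k+1-(L+1)), θ^i := by
          rw [Finset.mul_sum]; exact Finset.sum_congr rfl fun i _ => h1 i
      _ ≤ θ^(L+1) * (1-θ)⁻¹ := by
          refine mul_le_mul_of_nonneg_left ?_ (by positivity)
          calc ∑ i ∈ Finset.range (k+1-(L+1)), θ^i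
              ≤ ∑' i : ℕ, θ^i := Summable.sum_le_tsum _ (fun i _ => by positivity)
                (summable_geometric_of_lt_one hθ0.le hθ1)
            _ = (1-θ)⁻¹ := tsum_geometric_of_lt_one hθ0.le hθ1
  have hEinter : P (⋂ L, E L) = 0 := by
    refine measure_mono_null ?_ (ae_iff.mp hgood)
    intro ω hω
    simp only [Set.mem_setOf_eq]
    intro hp
    obtain ⟨c, hc⟩ := hp
    have htend0 : Tendsto (fun L : ℕ => Real.exp c * (θ^(L+1) * (1-θ)⁻¹)) atTop (nhds 0) := by
      have h1 : Tendsto (fun L : ℕ => θ^(L+1)) atTop (nhds 0) :=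
        (tendsto_pow_atTop_nhds_zero_of_lt_one hθ0.le hθ1).comp (tendsto_add_atTop_nat 1)
      have h2 := (h1.mul_const ((1-θ)⁻¹)).const_mul (Real.exp c)
      simpa using h2
    obtain ⟨L, hL⟩ := (htend0.eventually_lt_const (by positivity : (0:ℝ) < δ/4)).exists
    have hωL := Set.mem_iInter.mp hω L
    obtain ⟨k, hk⟩ := Set.mem_iUnion.mp hωL
    have hVle : V L k ω ≤ Real.exp c * (θ^(L+1) * (1-θ)⁻¹) := by
      calc V L k ω ≤ ∑ m ∈ Finset.Icc (L+1) k, Real.exp c * θ^m :=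
            Finset.sum_le_sum fun m _ => hc m
        _ = Real.exp c * ∑ m ∈ Finset.Icc (L+1) k, θ^m := (Finset.mul_sum _ _ _).symm
        _ ≤ _ := mul_le_mul_of_nonneg_left (hgeom L k) (Real.exp_nonneg _)
    have : (δ:ℝ)/4 < δ/4 := lt_of_le_of_lt (le_trans hk hVle) hL
    exact absurd this (lt_irrefl _)
  have hEtend : Tendsto (fun L => P (E L)) atTop (nhds 0) := by
    rw [← hEinter]
    exact tendsto_measure_iInter_atTop (fun L => (hEmeas L).nullMeasurableSet) hEanti
      ⟨0, measure_ne_top P _⟩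
  -- the A-part tends to zero in probability
  have hAtend : Tendsto (fun k : ℕ =>
      P {ω | δ/2 ≤ y 0 ω * Real.exp (∑ j ∈ Finset.range k, Q (T^[j] ω))}) atTop (nhds 0) := by
    have haezero : ∀ᵐ ω ∂P, Tendsto
        (fun k : ℕ => y 0 ω * Real.exp (∑ j ∈ Finset.range k, Q (T^[j] ω))) atTop (nhds 0) := by
      filter_upwards [hUP_T] with ω hω
      obtain ⟨c, hc⟩ := hω
      refine squeeze_zero (fun k => mul_nonneg (hy_nonneg 0 ω) (Real.exp_nonneg _))
        (g := fun k => (y 0 ω * Real.exp c) * (Real.exp c0)^k) (fun k => ?_) ?_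
      · have h1 : Real.exp (∑ j ∈ Finset.range k, Q (T^[j] ω))
            ≤ Real.exp ((k:ℝ) * c0 + c) := Real.exp_le_exp.mpr (hc k)
        calc y 0 ω * Real.exp (∑ j ∈ Finset.range k, Q (T^[j] ω))
            ≤ y 0 ω * Real.exp ((k:ℝ) * c0 + c) :=
              mul_le_mul_of_nonneg_left h1 (hy_nonneg 0 ω)
          _ = (y 0 ω * Real.exp c) * (Real.exp c0)^k := by
              rw [Real.exp_add, ← Real.exp_nat_mul]; ring
      · have h2 : Tendsto (fun k : ℕ => (Real.exp c0)^k) atTop (nhds 0) :=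
          tendsto_pow_atTop_nhds_zero_of_lt_one (Real.exp_nonneg _)
            (Real.exp_lt_one_iff.mpr hc00)
        simpa using h2.const_mul (y 0 ω * Real.exp c)
    have hmeasA : ∀ k : ℕ, AEStronglyMeasurable
        (fun ω => y 0 ω * Real.exp (∑ j ∈ Finset.range k, Q (T^[j] ω))) P := fun k =>
      ((hy_meas 0).mul (Real.measurable_exp.comp
        (Finset.measurable_sum _ fun j _ => hQm.comp (hTm.iterate j)))).aestronglyMeasurable
    have hTIM : TendstoInMeasure P
        (fun k ω => y 0 ω * Real.exp (∑ j ∈ Finset.range k, Q (T^[j] ω))) atTop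
        (fun _ => (0:ℝ)) := tendstoInMeasure_of_tendsto_ae hmeasA haezero
    have h3 := (tendstoInMeasure_iff_dist.mp hTIM) (δ/2) (by positivity)
    have h4 : (fun k : ℕ => P {x | δ/2 ≤
        dist (y 0 x * Real.exp (∑ j ∈ Finset.range k, Q (T^[j] x))) 0})
        = fun k : ℕ => P {ω | δ/2 ≤ y 0 ω * Real.exp (∑ j ∈ Finset.range k, Q (T^[j] ω))} := by
      funext k
      congr 1
      ext ω
      simp only [Set.mem_setOf_eq, Real.dist_eq, sub_zero,
        abs_of_nonneg (mul_nonneg (hy_nonneg 0 ω) (Real.exp_nonneg _))]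
    rwa [h4] at h3
  -- now fix ε and produce the eventual bound
  rw [ENNReal.tendsto_nhds_zero]
  intro ε hε
  have hε4 : (0:ENNReal) < ε/4 := ENNReal.div_pos hε.ne' (by norm_num)
  obtain ⟨L0, hL0⟩ := (ENNReal.tendsto_nhds_zero.mp hEtend (ε/4) hε4).exists
  set t0 : ℝ := δ / (4*(L0+1)) with ht0def
  have ht0 : 0 < t0 := by rw [ht0def]; positivity
  -- choose a cutoff c for the backward sums R m, m ≤ L0
  have hRtail : ∀ m : ℕ, Tendsto (fun c : ℕ => P {ω | (c:ℝ) ≤ R m ω}) atTop (nhds 0) := by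
    intro m
    have h1 : ⋂ c : ℕ, {ω | (c:ℝ) ≤ R m ω} = ∅ := by
      rw [Set.eq_empty_iff_forall_notMem]
      intro ω hω
      obtain ⟨c, hc⟩ := exists_nat_gt (R m ω)
      exact absurd (Set.mem_iInter.mp hω c) (not_le.mpr hc)
    have h2 := tendsto_measure_iInter_atTop (μ := P)
      (s := fun c : ℕ => {ω | (c:ℝ) ≤ R m ω})
      (fun c => (measurableSet_le measurable_const (hRmeas m)).nullMeasurableSet)
      (fun c c' hcc' ω hω => le_trans (show ((c:ℝ)) ≤ ((c':ℝ)) by exact_mod_cast hcc') hω)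
      ⟨0, measure_ne_top P _⟩
    rw [h1] at h2
    simpa [Function.comp_def] using h2
  have hsumR : Tendsto (fun c : ℕ => ∑ m ∈ Finset.Icc 1 L0, P {ω | (c:ℝ) ≤ R m ω})
      atTop (nhds 0) := by
    have := tendsto_finset_sum (Finset.Icc 1 L0) (fun m _ => hRtail m)
    simpa using this
  obtain ⟨c, hc⟩ := (ENNReal.tendsto_nhds_zero.mp hsumR (ε/4) hε4).exists
  set s0 : ℝ := t0 * Real.exp (-(c:ℝ)) with hs0def
  have hs0 : 0 < s0 := by rw [hs0def]; positivity
  have hηtend : Tendsto (fun k : ℕ => ∑ m ∈ Finset.Icc 1 L0, P {ω | s0 ≤ η (k-m) ω})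
      atTop (nhds 0) := by
    have := tendsto_finset_sum (Finset.Icc 1 L0)
      (fun m _ => (hii s0 hs0).comp (tendsto_sub_atTop_nat m))
    simpa using this
  have hηev := ENNReal.tendsto_nhds_zero.mp hηtend (ε/4) hε4
  have hAev := ENNReal.tendsto_nhds_zero.mp hAtend (ε/4) hε4
  filter_upwards [hAev, hηev, eventually_ge_atTop (L0+1)] with k hA4 hη4 hkL
  have hk1 : 1 ≤ k := by omega
  -- the sum identity: window sums are backward sums at T^[k] ω
  have hsum : ∀ j, j ≤ k → ∀ ω : Ω,
      ∑ j' ∈ Finset.Ico j k, Q (T^[j'] ω) = R (k-j) (T^[k] ω) := by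
    intro j hj ω
    rw [Finset.sum_Ico_eq_sum_range]
    rw [hRdef]
    rw [← Finset.sum_range_reflect]
    refine Finset.sum_congr rfl fun i hi => ?_
    have hi' : i < k - j := Finset.mem_range.mp hi
    have h1 : j + (k - j - 1 - i) = k - (i+1) := by omega
    rw [h1, ← hback (i+1) k ω (by omega)]
  -- main decomposition
  set Ak : Ω → ℝ := fun ω => y 0 ω * Real.exp (∑ j ∈ Finset.range k, Q (T^[j] ω)) with hAkdef
  set oldk : Ω → ℝ := fun ω => ∑ j ∈ Finset.range (k - L0),
      Real.exp (∑ j' ∈ Finset.Ico j k, Q (T^[j'] ω)) * η j ω with holddef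
  set reck : Ω → ℝ := fun ω => ∑ j ∈ Finset.Ico (k - L0) k,
      Real.exp (∑ j' ∈ Finset.Ico j k, Q (T^[j'] ω)) * η j ω with hrecdef
  have hsplit : ∀ ω : Ω, (∑ j ∈ Finset.range k,
      Real.exp (∑ j' ∈ Finset.Ico j k, Q (T^[j'] ω)) * η j ω) = oldk ω + reck ω := by
    intro ω
    simp only [holddef, hrecdef]
    rw [Finset.range_eq_Ico,
      ← Finset.sum_Ico_consecutive _ (Nat.zero_le (k-L0)) (Nat.sub_le k L0)]
    rw [Finset.range_eq_Ico]
  have hmain : P {ω | δ ≤ y k ω} ≤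
      P ({ω | δ/2 ≤ Ak ω} ∪ ({ω | δ/4 ≤ oldk ω} ∪ {ω | δ/4 ≤ reck ω})) := by
    refine measure_mono_ae ?_
    filter_upwards [hiii k hk1] with ω hω hmem
    have hδω : δ ≤ y k ω := hmem
    show ω ∈ {ω | δ/2 ≤ Ak ω} ∪ ({ω | δ/4 ≤ oldk ω} ∪ {ω | δ/4 ≤ reck ω})
    by_contra hcon
    simp only [Set.mem_union, Set.mem_setOf_eq, not_or, not_le] at hcon
    obtain ⟨h1, h2, h3⟩ := hcon
    rw [hsplit ω] at hω
    have : y k ω < δ/2 + (δ/4 + δ/4) := by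
      calc y k ω ≤ Ak ω + (oldk ω + reck ω) := hω
        _ < δ/2 + (δ/4 + δ/4) := by
            exact add_lt_add h1 (add_lt_add h2 h3)
    linarith
  -- bound the old part
  have hVb : ∀ ω : Ω, oldk ω ≤ V L0 k (T^[k] ω) := by
    intro ω
    have h1 : oldk ω ≤ ∑ j ∈ Finset.range (k - L0),
        Real.exp (R (k-j) (T^[k] ω)) * b (S^[k-j] (T^[k] ω)) := by
      rw [holddef]
      refine Finset.sum_le_sum fun j hj => ?_
      have hjk : j ≤ k := by
        have := Finset.mem_range.mp hj; omega
      rw [hsum j hjk ω]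
      refine mul_le_mul_of_nonneg_left ?_ (Real.exp_nonneg _)
      rw [hback (k-j) k ω (by omega), show k - (k-j) = j by omega]
      exact hi j ω
    refine h1.trans (le_of_eq ?_)
    rw [hVdef]
    refine Finset.sum_nbij' (fun j => k - j) (fun m => k - m) ?_ ?_ ?_ ?_ ?_
    · intro j hj
      have := Finset.mem_range.mp hj
      show k - j ∈ Finset.Icc (L0+1) k
      exact Finset.mem_Icc.mpr ⟨by omega, by omega⟩
    · intro m hm
      have := Finset.mem_Icc.mp hm
      show k - m ∈ Finset.range (k - L0)
      exact Finset.mem_range.mpr (by omega)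
    · intro j hj
      have := Finset.mem_range.mp hj
      show k - (k - j) = j
      omega
    · intro m hm
      have := Finset.mem_Icc.mp hm
      show k - (k - m) = m
      omega
    · intro j hj
      rfl
  have hold : P {ω | δ/4 ≤ oldk ω} ≤ ε/4 := by
    have hsub : {ω | δ/4 ≤ oldk ω} ⊆ T^[k] ⁻¹' (E L0) := by
      intro ω hω
      exact Set.mem_iUnion.2 ⟨k, le_trans hω (hVb ω)⟩
    calc P {ω | δ/4 ≤ oldk ω} ≤ P (T^[k] ⁻¹' (E L0)) := measure_mono hsub
      _ = P (E L0) := (hT.toMeasurePreserving.iterate k).measure_preimage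
          (hEmeas L0).nullMeasurableSet
      _ ≤ ε/4 := hL0
  -- bound the recent part
  have hrec : P {ω | δ/4 ≤ reck ω} ≤ ε/4 + ε/4 := by
    have hsubrec : {ω | δ/4 ≤ reck ω} ⊆ ⋃ m ∈ Finset.Icc 1 L0,
        ({ω | (c:ℝ) ≤ R m (T^[k] ω)} ∪ {ω | s0 ≤ η (k-m) ω}) := by
      intro ω hω
      by_contra hcon
      simp only [Set.mem_iUnion, Set.mem_union, Set.mem_setOf_eq, not_exists, not_or,
        not_le] at hcon
      have hterm : ∀ j ∈ Finset.Ico (k - L0) k,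
          Real.exp (∑ j' ∈ Finset.Ico j k, Q (T^[j'] ω)) * η j ω ≤ t0 := by
        intro j hj
        obtain ⟨hj1, hj2⟩ := Finset.mem_Ico.mp hj
        have hm : k - j ∈ Finset.Icc 1 L0 := Finset.mem_Icc.mpr ⟨by omega, by omega⟩
        obtain ⟨hcR, hcη⟩ := hcon (k-j) hm
        rw [hsum j (by omega) ω]
        have hη' : η j ω ≤ s0 := by
          have : k - (k - j) = j := by omega
          rw [this] at hcη
          exact hcη.le
        calc Real.exp (R (k-j) (T^[k] ω)) * η j ω
            ≤ Real.exp (c:ℝ) * s0 :=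
              mul_le_mul (Real.exp_le_exp.mpr hcR.le) hη' (hη_nonneg _ _) (Real.exp_nonneg _)
          _ = t0 := by
              rw [hs0def, mul_comm (t0) _, ← mul_assoc, ← Real.exp_add]
              simp
      have hcard : (Finset.Ico (k - L0) k).card = L0 := by
        rw [Nat.card_Ico]; omega
      have hle : reck ω ≤ (L0:ℝ) * t0 := by
        calc reck ω ≤ (Finset.Ico (k - L0) k).card • t0 :=
              Finset.sum_le_card_nsmul _ _ _ hterm
          _ = (L0:ℝ) * t0 := by rw [hcard, nsmul_eq_mul]
      have hlt : (L0:ℝ) * t0 < δ/4 := by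
        rw [ht0def]
        rw [show (4:ℝ) * (L0+1) = 4 * ((L0:ℝ)+1) by push_cast; ring]
        have hL0pos : (0:ℝ) < (L0:ℝ) + 1 := by positivity
        rw [mul_div_assoc']
        rw [div_lt_div_iff₀ (by positivity) (by norm_num)]
        nlinarith [hδ]
      have : δ/4 ≤ reck ω := hω
      linarith
    calc P {ω | δ/4 ≤ reck ω}
        ≤ ∑ m ∈ Finset.Icc 1 L0, P ({ω | (c:ℝ) ≤ R m (T^[k] ω)} ∪ {ω | s0 ≤ η (k-m) ω}) :=
          (measure_mono hsubrec).trans (measure_biUnion_finset_le _ _)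
      _ ≤ ∑ m ∈ Finset.Icc 1 L0,
            (P {ω | (c:ℝ) ≤ R m (T^[k] ω)} + P {ω | s0 ≤ η (k-m) ω}) :=
          Finset.sum_le_sum fun m _ => measure_union_le _ _
      _ = (∑ m ∈ Finset.Icc 1 L0, P {ω | (c:ℝ) ≤ R m (T^[k] ω)}) +
            ∑ m ∈ Finset.Icc 1 L0, P {ω | s0 ≤ η (k-m) ω} := Finset.sum_add_distrib
      _ ≤ ε/4 + ε/4 := by
          refine add_le_add (le_trans (le_of_eq ?_) hc) hη4
          refine Finset.sum_congr rfl fun m _ => ?_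
          have : {ω | (c:ℝ) ≤ R m (T^[k] ω)} = T^[k] ⁻¹' {ω | (c:ℝ) ≤ R m ω} := rfl
          rw [this, (hT.toMeasurePreserving.iterate k).measure_preimage
            (measurableSet_le measurable_const (hRmeas m)).nullMeasurableSet]
  -- put everything together
  calc P {ω | δ ≤ y k ω}
      ≤ P ({ω | δ/2 ≤ Ak ω} ∪ ({ω | δ/4 ≤ oldk ω} ∪ {ω | δ/4 ≤ reck ω})) := hmain
    _ ≤ P {ω | δ/2 ≤ Ak ω} + (P {ω | δ/4 ≤ oldk ω} + P {ω | δ/4 ≤ reck ω}) :=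
        le_trans (measure_union_le _ _) (add_le_add le_rfl (measure_union_le _ _))
    _ ≤ ε/4 + (ε/4 + (ε/4 + ε/4)) := by
        exact add_le_add hA4 (add_le_add hold hrec)
    _ ≤ ε := by
        rw [ENNReal.div_add_div_same, ENNReal.div_add_div_same, ENNReal.div_add_div_same]
        rw [show ε + (ε + (ε + ε)) = 4 * ε by ring]
        rw [show (4:ENNReal) * ε / 4 = ε from by
          rw [mul_comm, mul_div_assoc]
          rw [ENNReal.div_self (by norm_num) (by norm_num), mul_one]]
end Main
/-- Let `(Ω, F, P)` be a probability space and `T : Ω → Ω` invertible (with inverse `S`)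
with `T`, `S` measurable and measure-preserving and `T` ergodic. Let `Q : Ω → ℝ` be
integrable with `E[Q] < 0`, and `b : Ω → [0,∞)` measurable and tempered
(`log⁺ b(T^n ω)/|n| → 0` as `n → ±∞` a.s.). Let `y k, η j : Ω → [0,∞)` be measurable
with (i) `η j ω ≤ b (T^[j] ω)`; (ii) `η j → 0` in probability;
(iii) for every `k ≥ 1`, a.s.
`y k ω ≤ y 0 ω · exp (∑_{j<k} Q(T^[j]ω)) + ∑_{j<k} exp (∑_{j'=j}^{k−1} Q(T^[j']ω)) · η j ω`.
Then `y k → 0` in probability as `k → ∞`. -/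
theorem stmt_4 {Ω : Type*} [MeasurableSpace Ω] (P : Measure Ω) [IsProbabilityMeasure P]
    (T S : Ω → Ω) (hST : ∀ ω, S (T ω) = ω) (hTS : ∀ ω, T (S ω) = ω)
    (hT : Ergodic T P) (hS : MeasurePreserving S P P)
    (Q : Ω → ℝ) (hQ : Integrable Q P) (hEQ : ∫ ω, Q ω ∂P < 0)
    (b : Ω → ℝ) (hb_meas : Measurable b) (hb_nonneg : ∀ ω, 0 ≤ b ω)
    (hb_temp : ∀ᵐ ω ∂P,
      Tendsto (fun n : ℕ => max (Real.log (b (T^[n] ω))) 0 / (n : ℝ)) atTop (nhds 0) ∧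
      Tendsto (fun n : ℕ => max (Real.log (b (S^[n] ω))) 0 / (n : ℝ)) atTop (nhds 0))
    (y η : ℕ → Ω → ℝ)
    (hy_meas : ∀ k, Measurable (y k)) (hη_meas : ∀ j, Measurable (η j))
    (hy_nonneg : ∀ k ω, 0 ≤ y k ω) (hη_nonneg : ∀ j ω, 0 ≤ η j ω)
    (hi : ∀ j ω, η j ω ≤ b (T^[j] ω))
    (hii : ∀ δ : ℝ, 0 < δ →
      Tendsto (fun j : ℕ => P {ω | δ ≤ η j ω}) atTop (nhds 0))
    (hiii : ∀ k : ℕ, 1 ≤ k → ∀ᵐ ω ∂P,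
      y k ω ≤ y 0 ω * Real.exp (∑ j ∈ Finset.range k, Q (T^[j] ω)) +
        ∑ j ∈ Finset.range k,
          Real.exp (∑ j' ∈ Finset.Ico j k, Q (T^[j'] ω)) * η j ω) :
    ∀ δ : ℝ, 0 < δ →
      Tendsto (fun k : ℕ => P {ω | δ ≤ y k ω}) atTop (nhds 0) := by
  -- replace `Q` by a measurable representative
  set Q' : Ω → ℝ := hQ.1.mk Q with hQ'def
  have hQ'm : Measurable Q' := hQ.1.stronglyMeasurable_mk.measurable
  have hQQ' : Q =ᵐ[P] Q' := hQ.1.ae_eq_mk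
  have hQ'i : Integrable Q' P := hQ.congr hQQ'
  have hEQ' : ∫ ω, Q' ω ∂P < 0 := by rwa [← integral_congr_ae hQQ']
  have horb : ∀ᵐ ω ∂P, ∀ n : ℕ, Q (T^[n] ω) = Q' (T^[n] ω) :=
    ae_all_iff.mpr fun n =>
      (hT.toMeasurePreserving.quasiMeasurePreserving.iterate n).ae hQQ'
  have hiii' : ∀ k : ℕ, 1 ≤ k → ∀ᵐ ω ∂P,
      y k ω ≤ y 0 ω * Real.exp (∑ j ∈ Finset.range k, Q' (T^[j] ω)) +
        ∑ j ∈ Finset.range k,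
          Real.exp (∑ j' ∈ Finset.Ico j k, Q' (T^[j'] ω)) * η j ω := by
    intro k hk
    filter_upwards [hiii k hk, horb] with ω h1 h2
    have e1 : ∑ j ∈ Finset.range k, Q (T^[j] ω) = ∑ j ∈ Finset.range k, Q' (T^[j] ω) :=
      Finset.sum_congr rfl fun j _ => h2 j
    have e2 : (∑ j ∈ Finset.range k,
        Real.exp (∑ j' ∈ Finset.Ico j k, Q (T^[j'] ω)) * η j ω) =
        ∑ j ∈ Finset.range k, Real.exp (∑ j' ∈ Finset.Ico j k, Q' (T^[j'] ω)) * η j ω :=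
      Finset.sum_congr rfl fun j _ => by
        rw [Finset.sum_congr rfl fun j' _ => h2 j']
    refine le_trans h1 (le_of_eq ?_)
    rw [e1, e2]
  exact stmt_4_meas P T S hST hTS hT hS Q' hQ'm hQ'i hEQ' b hb_meas hb_nonneg hb_temp
    y η hy_meas hη_meas hy_nonneg hη_nonneg hi hii hiii'
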